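/- Suppose the matrix series G₁(z) = Σ_{n≥1} D₁^{(n)}(z) converges absolutely, where D₁^{(n)}(z) = Σ_{σ∈𝓘_{D,1,n}} A_{*,σ₁}(z)···A_{*,σ_n}(z). Then G₁(z) satisfies the matrix quadratic equation A_{*,−1}(z) + A_{*,0}(z) G₁(z) + A_{*,1}(z) G₁(z)² = G₁(z). -/

import Mathlib

open Matrix

/-- Encoding of `{−1, 0, 1}` by `Fin 3`. -/
def stepZ : Fin 3 → ℤ := fun t => (t : ℤ) - 1

open Classical in
/-- `𝓘_{D,m,n}`: the set of `{−1,0,1}`-sequences of length `n` whose proper partial sums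
are `≥ −m+1` and whose total sum is `−m`. -/
noncomputable def Dset (m n : ℕ) : Finset (Fin n → Fin 3) :=
  Finset.univ.filter fun σ =>
    (∀ k : Fin n, (k : ℕ) < n - 1 →
      -(m : ℤ) + 1 ≤ ∑ l ∈ Finset.univ.filter (· ≤ k), stepZ (σ l)) ∧
    ∑ l, stepZ (σ l) = -(m : ℤ)

/-- `A_{*,j}(z) = Σ_{i ∈ {−1,0,1}} A_{i,j} z^i` as a complex matrix. -/
noncomputable def AstarC {S : Type*} [Fintype S] (A : ℤ → ℤ → Matrix S S ℝ) (j : ℤ)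
    (z : ℂ) : Matrix S S ℂ :=
  ∑ i ∈ Finset.Icc (-1 : ℤ) 1, z ^ i • (A i j).map Complex.ofReal

/-- `D₁⁽ⁿ⁾(z) = Σ_{σ ∈ 𝓘_{D,1,n}} A_{*,σ₁}(z) ⋯ A_{*,σₙ}(z)`. -/
noncomputable def DnC {S : Type*} [Fintype S] [DecidableEq S]
    (A : ℤ → ℤ → Matrix S S ℝ) (n : ℕ) (z : ℂ) : Matrix S S ℂ :=
  ∑ σ ∈ Dset 1 n, (List.ofFn fun l : Fin n => AstarC A (stepZ (σ l)) z).prod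

namespace Stmt14

/-- evaluation of a `Fin n`-sequence extended by `1` (step `0`). -/
def ev {n : ℕ} (σ : Fin n → Fin 3) (i : ℕ) : Fin 3 := if h : i < n then σ ⟨i, h⟩ else 1

/-- partial sum of first `j` steps -/
def Ps {n : ℕ} (σ : Fin n → Fin 3) (j : ℕ) : ℤ :=
  ∑ i ∈ Finset.range j, stepZ (ev σ i)

lemma stepZ_one : stepZ 1 = 0 := by decide

lemma ev_lt {n : ℕ} (σ : Fin n → Fin 3) {i : ℕ} (h : i < n) : ev σ i = σ ⟨i, h⟩ := dif_pos h

lemma filter_sum_eq {n : ℕ} (σ : Fin n → Fin 3) (j : ℕ) (hj : j ≤ n) :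
    ∑ l ∈ Finset.univ.filter (fun l : Fin n => (l : ℕ) < j), stepZ (σ l) = Ps σ j := by
  unfold Ps
  refine Finset.sum_bij' (i := fun (l : Fin n) _ => (l : ℕ))
    (j := fun (i : ℕ) hi => (⟨i, lt_of_lt_of_le (Finset.mem_range.mp hi) hj⟩ : Fin n))
    (hi := ?_) (hj := ?_) (left_neg := ?_) (right_neg := ?_) (h := ?_)
  · intro a ha; simpa using (Finset.mem_filter.mp ha).2
  · intro a ha; simp [Finset.mem_range.mp ha]
  · intro a _; rfl
  · intro a _; rfl
  · intro a ha
    simp [ev_lt σ a.is_lt]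

lemma Ps_zero {n : ℕ} (σ : Fin n → Fin 3) : Ps σ 0 = 0 := by simp [Ps]

lemma Ps_succ {n : ℕ} (σ : Fin n → Fin 3) (j : ℕ) :
    Ps σ (j + 1) = Ps σ j + stepZ (ev σ j) := Finset.sum_range_succ _ _

lemma Ps_total {n : ℕ} (σ : Fin n → Fin 3) : Ps σ n = ∑ l, stepZ (σ l) := by
  rw [← filter_sum_eq σ n le_rfl]
  congr 1
  simp [Finset.eq_univ_iff_forall, Fin.is_lt]

lemma filter_le_sum {n : ℕ} (σ : Fin n → Fin 3) (k : Fin n) :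
    ∑ l ∈ Finset.univ.filter (· ≤ k), stepZ (σ l) = Ps σ ((k : ℕ) + 1) := by
  rw [← filter_sum_eq σ ((k : ℕ) + 1) (by omega)]
  congr 1
  ext l
  simp only [Finset.mem_filter, Finset.mem_univ, true_and, Fin.le_def, Nat.lt_succ_iff]

lemma stepZ_bounds (t : Fin 3) : -1 ≤ stepZ t ∧ stepZ t ≤ 1 := by
  have := t.is_lt
  unfold stepZ
  omega

/-- clean membership criterion -/
lemma mem_Dset {m n : ℕ} (hm : 1 ≤ m) (σ : Fin n → Fin 3) :
    σ ∈ Dset m n ↔ (∀ j < n, -(m : ℤ) + 1 ≤ Ps σ j) ∧ Ps σ n = -(m : ℤ) := by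
  classical
  unfold Dset
  rw [Finset.mem_filter]
  simp only [Finset.mem_univ, true_and]
  constructor
  · rintro ⟨h1, h2⟩
    refine ⟨?_, by rw [Ps_total]; exact h2⟩
    intro j hj
    match j with
    | 0 => simp [Ps_zero]; omega
    | j + 1 =>
      have hk : j < n - 1 := by omega
      have := h1 ⟨j, by omega⟩ hk
      rwa [filter_le_sum] at this
  · rintro ⟨h1, h2⟩
    refine ⟨?_, by rw [← Ps_total]; exact h2⟩
    intro k hk
    rw [filter_le_sum]
    exact h1 ((k : ℕ) + 1) (by omega)


lemma ev_cons_succ {n : ℕ} (i : Fin 3) (τ : Fin n → Fin 3) (j : ℕ) :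
    ev (Fin.cons i τ) (j + 1) = ev τ j := by
  unfold ev
  by_cases h : j < n
  · rw [dif_pos (by omega : j + 1 < n + 1), dif_pos h]
    exact @Fin.cons_succ _ (fun _ => Fin 3) i τ ⟨j, h⟩
  · rw [dif_neg (by omega), dif_neg h]

lemma Ps_cons {n : ℕ} (i : Fin 3) (τ : Fin n → Fin 3) (j : ℕ) :
    Ps (Fin.cons i τ) (j + 1) = stepZ i + Ps τ j := by
  induction j with
  | zero =>
    rw [Ps_succ, Ps_zero, Ps_zero]
    simp [ev, Fin.cons_zero]
  | succ j ih => rw [Ps_succ, ih, Ps_succ, ev_cons_succ, add_assoc]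

lemma mem_Dset1_succ {n : ℕ} (σ : Fin (n + 2) → Fin 3) :
    σ ∈ Dset 1 (n + 2) ↔
      (σ 0 = 1 ∧ Fin.tail σ ∈ Dset 1 (n + 1)) ∨ (σ 0 = 2 ∧ Fin.tail σ ∈ Dset 2 (n + 1)) := by
  have hσ : Fin.cons (σ 0) (Fin.tail σ) = σ := Fin.cons_self_tail σ
  have hPs : ∀ j, Ps σ (j + 1) = stepZ (σ 0) + Ps (Fin.tail σ) j := fun j => by
    conv_lhs => rw [← hσ]
    exact Ps_cons _ _ j
  rw [mem_Dset le_rfl, mem_Dset le_rfl, mem_Dset (by norm_num)]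
  constructor
  · rintro ⟨h1, h2⟩
    have h10 := h1 1 (by omega)
    rw [hPs 0, Ps_zero] at h10
    have hval : ((σ 0 : ℕ) : ℤ) - 1 = stepZ (σ 0) := rfl
    have hcase : (σ 0 : ℕ) = 1 ∨ (σ 0 : ℕ) = 2 := by
      have h3 := (σ 0).is_lt
      omega
    have h2' : stepZ (σ 0) + Ps (Fin.tail σ) (n + 1) = -(1:ℤ) := (hPs (n + 1)).symm.trans h2
    rcases hcase with h | h
    · left
      have h0 : σ 0 = 1 := Fin.ext (by simpa using h)
      have hs : stepZ (σ 0) = 0 := by rw [h0]; decide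
      refine ⟨h0, fun j hj => ?_, by omega⟩
      have := h1 (j + 1) (by omega)
      rw [hPs j] at this
      omega
    · right
      have h0 : σ 0 = 2 := Fin.ext (by simpa using h)
      have hs : stepZ (σ 0) = 1 := by rw [h0]; decide
      refine ⟨h0, fun j hj => ?_, by omega⟩
      have := h1 (j + 1) (by omega)
      rw [hPs j] at this
      omega
  · rintro (⟨h0, h1, h2⟩ | ⟨h0, h1, h2⟩)
    · have hs : stepZ (σ 0) = 0 := by rw [h0]; decide
      constructor
      · intro j hj
        match j with
        | 0 => rw [Ps_zero]; omega
        | j + 1 =>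
          have := h1 j (by omega)
          rw [hPs j]
          omega
      · have hPt : Ps σ (n + 2) = stepZ (σ 0) + Ps (Fin.tail σ) (n + 1) := hPs (n + 1)
        omega
    · have hs : stepZ (σ 0) = 1 := by rw [h0]; decide
      constructor
      · intro j hj
        match j with
        | 0 => rw [Ps_zero]; omega
        | j + 1 =>
          have := h1 j (by omega)
          rw [hPs j]
          omega
      · have hPt : Ps σ (n + 2) = stepZ (σ 0) + Ps (Fin.tail σ) (n + 1) := hPs (n + 1)
        omega

lemma Dset1_one : Dset 1 1 = {fun _ => 0} := by
  ext σ
  rw [mem_Dset le_rfl, Finset.mem_singleton]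
  constructor
  · rintro ⟨-, h2⟩
    funext l
    have hl : l = ⟨0, by omega⟩ := by ext; omega
    rw [Ps_succ, Ps_zero, ev_lt σ (by omega : 0 < 1)] at h2
    subst hl
    apply Fin.ext
    have hval : ((σ ⟨0, by omega⟩ : ℕ) : ℤ) - 1 = stepZ (σ ⟨0, by omega⟩) := rfl
    have : ((0 : Fin 3) : ℕ) = 0 := rfl
    omega
  · rintro rfl
    refine ⟨fun j hj => ?_, ?_⟩
    · interval_cases j
      rw [Ps_zero]; omega
    · rw [Ps_succ, Ps_zero, ev_lt _ (by omega : (0:ℕ) < 1)]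
      decide


def consF {n : ℕ} (i : Fin 3) (τ : Fin n → Fin 3) : Fin (n + 1) → Fin 3 := Fin.cons i τ

lemma consF_injective {n : ℕ} (i : Fin 3) : Function.Injective (consF (n := n) i) := by
  intro a b h
  funext l
  have := congrFun h l.succ
  simpa [consF] using this

lemma image_consF_mem {n : ℕ} (i : Fin 3) (s : Finset (Fin (n + 1) → Fin 3))
    (σ : Fin (n + 2) → Fin 3) :
    σ ∈ s.image (consF i) ↔ σ 0 = i ∧ Fin.tail σ ∈ s := by
  rw [Finset.mem_image]
  constructor
  · rintro ⟨τ, hτ, rfl⟩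
    refine ⟨by simp [consF], by rw [consF, Fin.tail_cons]; exact hτ⟩
  · rintro ⟨h0, h1⟩
    exact ⟨Fin.tail σ, h1, by rw [consF, ← h0, Fin.cons_self_tail]⟩
noncomputable def D2 {S : Type*} [Fintype S] [DecidableEq S] (A : ℤ → ℤ → Matrix S S ℝ)
    (n : ℕ) (z : ℂ) : Matrix S S ℂ :=
  ∑ σ ∈ Dset 2 n, (List.ofFn fun l : Fin n => AstarC A (stepZ (σ l)) z).prod

section Mat
variable {S : Type*} [Fintype S] [DecidableEq S] (A : ℤ → ℤ → Matrix S S ℝ) (z : ℂ)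

lemma DnC_one : DnC A 1 z = AstarC A (-1) z := by
  rw [DnC, Dset1_one, Finset.sum_singleton]
  simp [List.ofFn_succ, show stepZ 0 = -1 from by decide]


lemma prod_cons {n : ℕ} (i : Fin 3) (τ : Fin n → Fin 3) :
    (List.ofFn fun l : Fin (n + 1) => AstarC A (stepZ (consF i τ l)) z).prod
      = AstarC A (stepZ i) z * (List.ofFn fun l : Fin n => AstarC A (stepZ (τ l)) z).prod := by
  rw [List.ofFn_succ]
  simp [consF, List.prod_cons]

lemma Dn_rec (n : ℕ) : DnC A (n + 2) z
    = AstarC A 0 z * DnC A (n + 1) z + AstarC A 1 z * D2 A (n + 1) z := by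
  have hset : Dset 1 (n + 2)
      = ((Dset 1 (n + 1)).image (consF 1)) ∪ ((Dset 2 (n + 1)).image (consF 2)) := by
    ext σ
    rw [Finset.mem_union, image_consF_mem, image_consF_mem, mem_Dset1_succ]
  have hdisj : Disjoint ((Dset 1 (n + 1)).image (consF 1))
      ((Dset 2 (n + 1)).image (consF 2)) := by
    rw [Finset.disjoint_left]
    intro σ ha hb
    rw [image_consF_mem] at ha hb
    exact absurd (ha.1.symm.trans hb.1) (by decide)
  rw [show DnC A (n+2) z = ∑ σ ∈ Dset 1 (n+2), (List.ofFn fun l : Fin (n+2) =>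
      AstarC A (stepZ (σ l)) z).prod from rfl, hset, Finset.sum_union hdisj,
    Finset.sum_image (fun x _ y _ h => consF_injective 1 h),
    Finset.sum_image (fun x _ y _ h => consF_injective 2 h)]
  rw [show DnC A (n+1) z = ∑ σ ∈ Dset 1 (n+1), (List.ofFn fun l : Fin (n+1) =>
      AstarC A (stepZ (σ l)) z).prod from rfl, D2, Finset.mul_sum, Finset.mul_sum]
  congr 1
  · refine Finset.sum_congr rfl fun τ _ => ?_
    rw [prod_cons]
    norm_num [show stepZ 1 = 0 from by decide]
  · refine Finset.sum_congr rfl fun τ _ => ?_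
    rw [prod_cons]
    norm_num [show stepZ 2 = 1 from by decide]

end Mat
/-! ### First passage decomposition -/

def restr {N : ℕ} (σ : Fin N → Fin 3) (m : ℕ) : Fin m → Fin 3 :=
  fun l => if h : (l : ℕ) < N then σ ⟨l, h⟩ else 1

def shiftr {N : ℕ} (σ : Fin N → Fin 3) (m k : ℕ) : Fin k → Fin 3 :=
  fun l => if h : m + (l : ℕ) < N then σ ⟨m + l, h⟩ else 1

def joinF {N : ℕ} (m : ℕ) (α : Fin m → Fin 3) (β : Fin (N - m) → Fin 3) : Fin N → Fin 3 :=
  fun k => if h : (k : ℕ) < m then α ⟨k, h⟩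
    else if h2 : (k : ℕ) - m < N - m then β ⟨(k : ℕ) - m, h2⟩ else 1

lemma ev_restr {N m : ℕ} (σ : Fin N → Fin 3) {i : ℕ} (h : i < m) :
    ev (restr σ m) i = ev σ i := by
  unfold ev restr
  rw [dif_pos h]

lemma Ps_restr {N m : ℕ} (σ : Fin N → Fin 3) {j : ℕ} (hj : j ≤ m) :
    Ps (restr σ m) j = Ps σ j := by
  unfold Ps
  exact Finset.sum_congr rfl fun i hi => by
    rw [ev_restr σ (lt_of_lt_of_le (Finset.mem_range.mp hi) hj)]

lemma ev_shiftr {N m k : ℕ} (σ : Fin N → Fin 3) {i : ℕ} (h : i < k) :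
    ev (shiftr σ m k) i = ev σ (m + i) := by
  unfold ev shiftr
  rw [dif_pos h]

lemma Ps_shiftr {N m k : ℕ} (σ : Fin N → Fin 3) :
    ∀ j, j ≤ k → Ps (shiftr σ m k) j = Ps σ (m + j) - Ps σ m := by
  intro j
  induction j with
  | zero => intro _; simp [Ps_zero]
  | succ j ih =>
    intro hj
    rw [Ps_succ, ih (by omega), ev_shiftr σ (by omega : j < k),
      show m + (j + 1) = (m + j) + 1 from rfl, Ps_succ σ (m + j)]
    ring

lemma ev_joinF_lt {N m : ℕ} (hmN : m ≤ N) (α : Fin m → Fin 3) (β : Fin (N - m) → Fin 3)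
    {i : ℕ} (hi : i < m) : ev (joinF (N := N) m α β) i = ev α i := by
  unfold ev joinF
  rw [dif_pos (lt_of_lt_of_le hi hmN), dif_pos hi, dif_pos hi]

lemma ev_joinF_ge {N m : ℕ} (α : Fin m → Fin 3) (β : Fin (N - m) → Fin 3)
    {i : ℕ} (him : m ≤ i) (hiN : i < N) :
    ev (joinF (N := N) m α β) i = ev β (i - m) := by
  unfold ev joinF
  rw [dif_pos hiN]
  simp only [Fin.val_mk]
  rw [dif_neg (by omega : ¬ i < m), dif_pos (by omega : i - m < N - m)]

lemma Ps_joinF_le {N m : ℕ} (hmN : m ≤ N) (α : Fin m → Fin 3) (β : Fin (N - m) → Fin 3)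
    {j : ℕ} (hj : j ≤ m) : Ps (joinF (N := N) m α β) j = Ps α j := by
  unfold Ps
  exact Finset.sum_congr rfl fun i hi =>
    by rw [ev_joinF_lt hmN α β (lt_of_lt_of_le (Finset.mem_range.mp hi) hj)]

lemma Ps_joinF_ge {N m : ℕ} (hmN : m ≤ N) (α : Fin m → Fin 3) (β : Fin (N - m) → Fin 3)
    {j : ℕ} (hmj : m ≤ j) (hj : j ≤ N) :
    Ps (joinF (N := N) m α β) j = Ps α m + Ps β (j - m) := by
  obtain ⟨d, rfl⟩ : ∃ d, j = m + d := ⟨j - m, by omega⟩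
  induction d with
  | zero => simp [Ps_joinF_le hmN α β le_rfl, Ps_zero]
  | succ d ih =>
    rw [show m + (d + 1) = (m + d) + 1 from rfl, Ps_succ,
      ih (by omega) (by omega), ev_joinF_ge α β (by omega) (by omega),
      show m + d - m = d from by omega, show m + d + 1 - m = d + 1 from by omega,
      Ps_succ]
    ring

open Classical in
noncomputable def fp {N : ℕ} (σ : Fin N → Fin 3) : ℕ :=
  Nat.find (⟨N, Or.inr le_rfl⟩ : ∃ j, Ps σ j ≤ -1 ∨ N ≤ j)

open Classical in
lemma fp_props {N : ℕ} (σ : Fin N → Fin 3)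
    (hlow : ∀ j < N, -1 ≤ Ps σ j) (htot : Ps σ N = -2) :
    0 < fp σ ∧ fp σ < N ∧ Ps σ (fp σ) = -1 ∧ ∀ j < fp σ, 0 ≤ Ps σ j := by
  have hN : 0 < N := by
    rcases Nat.eq_zero_or_pos N with h | h
    · subst h; rw [Ps_zero] at htot; omega
    · exact h
  have hspec : Ps σ (fp σ) ≤ -1 ∨ N ≤ fp σ :=
    Nat.find_spec (⟨N, Or.inr le_rfl⟩ : ∃ j, Ps σ j ≤ -1 ∨ N ≤ j)
  have hmin : ∀ j < fp σ, ¬(Ps σ j ≤ -1 ∨ N ≤ j) :=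
    fun j hj => Nat.find_min _ hj
  have hle : fp σ ≤ N := Nat.find_le (Or.inr le_rfl)
  have hpos : 0 < fp σ := by
    rcases Nat.eq_zero_or_pos (fp σ) with h | h
    · exfalso
      rw [h, Ps_zero] at hspec
      omega
    · exact h
  have hstep : ∀ j < fp σ, 0 ≤ Ps σ j := by
    intro j hj
    have := hmin j hj
    push_neg at this
    omega
  have hprev : 0 ≤ Ps σ (fp σ - 1) := hstep _ (by omega)
  have hprevN : fp σ - 1 < N := by
    have := hmin (fp σ - 1) (by omega)
    push_neg at this
    omega
  have hPsfp : Ps σ (fp σ) = Ps σ (fp σ - 1) + stepZ (ev σ (fp σ - 1)) := by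
    have := Ps_succ σ (fp σ - 1)
    rw [show fp σ - 1 + 1 = fp σ from by omega] at this
    exact this
  have hsb := stepZ_bounds (ev σ (fp σ - 1))
  have hge : -1 ≤ Ps σ (fp σ) := by omega
  have hlt : fp σ < N := by
    rcases Nat.lt_or_ge (fp σ) N with h | h
    · exact h
    · exfalso
      have : fp σ = N := by omega
      rw [this] at hge
      omega
  have heq : Ps σ (fp σ) = -1 := by
    rcases hspec with h | h
    · omega
    · omega
  exact ⟨hpos, hlt, heq, hstep⟩

open Classical in
lemma fp_joinF {N m : ℕ} (hm0 : 0 < m) (hmN : m ≤ N) (α : Fin m → Fin 3)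
    (β : Fin (N - m) → Fin 3)
    (hα : ∀ j < m, 0 ≤ Ps α j) (hαm : Ps α m = -1) :
    fp (joinF (N := N) m α β) = m := by
  rw [fp, Nat.find_eq_iff]
  constructor
  · left
    rw [Ps_joinF_le hmN α β le_rfl, hαm]
  · intro j hj
    push_neg
    constructor
    · rw [Ps_joinF_le hmN α β (by omega)]
      have := hα j hj
      omega
    · omega

lemma prod_split {M : Type*} [Monoid M] {N : ℕ} (m : ℕ) (hm : m ≤ N) (F : Fin 3 → M)
    (σ : Fin N → Fin 3) :
    (List.ofFn fun l : Fin N => F (σ l)).prod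
      = (List.ofFn fun l : Fin m => F (restr σ m l)).prod
        * (List.ofFn fun l : Fin (N - m) => F (shiftr σ m (N - m) l)).prod := by
  rw [← List.prod_append]
  congr 1
  apply List.ext_getElem
  · simp
    omega
  · intro i h1 h2
    rw [List.getElem_ofFn]
    rw [List.getElem_append]
    by_cases hi : i < (List.ofFn fun l : Fin m => F (restr σ m l)).length
    · have hi' : i < m := by simpa using hi
      rw [dif_pos hi, List.getElem_ofFn]
      unfold restr
      simp only [Fin.val_mk]
      rw [dif_pos (show i < N by omega)]
    · have hi' : ¬ i < m := by simpa using hi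
      have hlen : (List.ofFn fun l : Fin m => F (restr σ m l)).length = m := by simp
      rw [dif_neg hi, List.getElem_ofFn]
      unfold shiftr
      simp only [Fin.val_mk, hlen]
      rw [dif_pos (show m + (i - m) < N by simp at h1; omega)]
      congr 1
      apply congrArg
      apply Fin.ext
      simp only [Fin.val_mk]
      omega

lemma joinF_restr_shiftr {N : ℕ} (m : ℕ) (σ : Fin N → Fin 3) :
    joinF (N := N) m (restr σ m) (shiftr σ m (N - m)) = σ := by
  funext k
  unfold joinF restr shiftr
  by_cases hk : (k : ℕ) < m
  · rw [dif_pos hk]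
    simp only [Fin.val_mk]
    rw [dif_pos k.is_lt]
  · rw [dif_neg hk, dif_pos (show (k : ℕ) - m < N - m by omega)]
    simp only [Fin.val_mk]
    rw [dif_pos (show m + ((k : ℕ) - m) < N by omega)]
    congr 1
    apply Fin.ext
    simp only [Fin.val_mk]
    omega

lemma restr_joinF {N m : ℕ} (hm : m ≤ N) (α : Fin m → Fin 3) (β : Fin (N - m) → Fin 3) :
    restr (joinF (N := N) m α β) m = α := by
  funext l
  unfold restr joinF
  rw [dif_pos (show (l : ℕ) < N by omega)]
  simp only [Fin.val_mk]
  rw [dif_pos l.is_lt]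

lemma shiftr_joinF {N m : ℕ} (α : Fin m → Fin 3) (β : Fin (N - m) → Fin 3) :
    shiftr (joinF (N := N) m α β) m (N - m) = β := by
  funext l
  have hl := l.is_lt
  unfold shiftr joinF
  rw [dif_pos (show m + (l : ℕ) < N by omega)]
  simp only [Fin.val_mk]
  rw [dif_neg (show ¬ m + (l : ℕ) < m by omega),
    dif_pos (show m + (l : ℕ) - m < N - m by omega)]
  congr 1
  apply Fin.ext
  simp only [Fin.val_mk]
  omega

section Mat2
variable {S : Type*} [Fintype S] [DecidableEq S] (A : ℤ → ℤ → Matrix S S ℝ) (z : ℂ)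

lemma D2_eq (N : ℕ) : D2 A N z = ∑ m ∈ Finset.Ioo 0 N, DnC A m z * DnC A (N - m) z := by
  classical
  rw [D2]
  have hmaps : ∀ σ ∈ Dset 2 N, fp σ ∈ Finset.Ioo 0 N := by
    intro σ hσ
    obtain ⟨h1, h2⟩ := (mem_Dset (by norm_num) σ).mp hσ
    have := fp_props σ (by intro j hj; have := h1 j hj; omega) (by omega)
    simp only [Finset.mem_Ioo]
    exact ⟨this.1, this.2.1⟩
  rw [← Finset.sum_fiberwise_of_maps_to hmaps]
  refine Finset.sum_congr rfl fun m hm => ?_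
  obtain ⟨hm0, hmN⟩ := Finset.mem_Ioo.mp hm
  rw [show DnC A m z = ∑ σ ∈ Dset 1 m, (List.ofFn fun l : Fin m =>
      AstarC A (stepZ (σ l)) z).prod from rfl,
    show DnC A (N - m) z = ∑ σ ∈ Dset 1 (N - m), (List.ofFn fun l : Fin (N - m) =>
      AstarC A (stepZ (σ l)) z).prod from rfl,
    Finset.sum_mul_sum, ← Finset.sum_product']
  refine Finset.sum_bij' (i := fun σ _ => (restr σ m, shiftr σ m (N - m)))
    (j := fun p _ => joinF (N := N) m p.1 p.2) ?_ ?_ ?_ ?_ ?_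
  · -- forward membership
    intro σ hσ
    rw [Finset.mem_filter] at hσ
    obtain ⟨hσD, hfp⟩ := hσ
    obtain ⟨h1, h2⟩ := (mem_Dset (by norm_num) σ).mp hσD
    have hlow : ∀ j < N, -1 ≤ Ps σ j := by intro j hj; have := h1 j hj; omega
    have htot : Ps σ N = -2 := by omega
    obtain ⟨hp0, hpN, hpeq, hpge⟩ := fp_props σ hlow htot
    rw [hfp] at hp0 hpN hpeq hpge
    rw [Finset.mem_product]
    constructor
    · rw [mem_Dset le_rfl]
      refine ⟨fun j hj => ?_, ?_⟩
      · rw [Ps_restr σ (by omega)]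
        have := hpge j hj
        omega
      · rw [Ps_restr σ le_rfl, hpeq]
        omega
    · rw [mem_Dset le_rfl]
      refine ⟨fun j hj => ?_, ?_⟩
      · rw [Ps_shiftr σ j (by omega), hpeq]
        have := hlow (m + j) (by omega)
        omega
      · rw [Ps_shiftr σ (N - m) le_rfl, hpeq, show m + (N - m) = N from by omega, htot]
        omega
  · -- backward membership
    intro p hp
    rw [Finset.mem_product] at hp
    obtain ⟨hα, hβ⟩ := hp
    obtain ⟨hα1, hα2⟩ := (mem_Dset le_rfl p.1).mp hα
    obtain ⟨hβ1, hβ2⟩ := (mem_Dset le_rfl p.2).mp hβ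
    have hα1' : ∀ j < m, 0 ≤ Ps p.1 j := by intro j hj; have := hα1 j hj; omega
    have hα2' : Ps p.1 m = -1 := by omega
    have hβ1' : ∀ j < N - m, 0 ≤ Ps p.2 j := by intro j hj; have := hβ1 j hj; omega
    have hβ2' : Ps p.2 (N - m) = -1 := by omega
    rw [Finset.mem_filter]
    constructor
    · rw [mem_Dset (by norm_num)]
      refine ⟨fun j hj => ?_, ?_⟩
      · by_cases hjm : j ≤ m
        · rw [Ps_joinF_le (by omega) p.1 p.2 hjm]
          rcases Nat.lt_or_ge j m with h | h
          · have := hα1' j h; omega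
          · have hjm' : j = m := by omega
            rw [hjm', hα2']
            omega
        · rw [Ps_joinF_ge (by omega) p.1 p.2 (by omega) (by omega), hα2']
          have := hβ1' (j - m) (by omega)
          omega
      · rw [Ps_joinF_ge (by omega) p.1 p.2 (by omega) le_rfl, hα2', hβ2']
        omega
    · exact fp_joinF hm0 (by omega) p.1 p.2 hα1' hα2'
  · -- left inverse
    intro σ _
    exact joinF_restr_shiftr m σ
  · -- right inverse
    intro p _
    exact Prod.ext (restr_joinF (by omega) p.1 p.2) (shiftr_joinF p.1 p.2)
  · -- value
    intro σ _
    exact prod_split m (by omega) (fun t => AstarC A (stepZ t) z) σ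

lemma D2_one : D2 A 1 z = 0 := by
  rw [D2_eq, show Finset.Ioo 0 1 = (∅ : Finset ℕ) from by decide, Finset.sum_empty]

lemma D2_succ_succ (n : ℕ) :
    D2 A (n + 2) z = ∑ p ∈ Finset.HasAntidiagonal.antidiagonal n, DnC A (p.1 + 1) z * DnC A (p.2 + 1) z := by
  rw [D2_eq, Finset.Nat.sum_antidiagonal_eq_sum_range_succ_mk]
  refine Finset.sum_bij' (i := fun m _ => m - 1) (j := fun k _ => k + 1) ?_ ?_ ?_ ?_ ?_
  · intro m hm
    rw [Finset.mem_Ioo] at hm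
    show m - 1 ∈ Finset.range (n + 1)
    rw [Finset.mem_range]
    omega
  · intro k hk
    rw [Finset.mem_range] at hk
    show k + 1 ∈ Finset.Ioo 0 (n + 2)
    rw [Finset.mem_Ioo]
    omega
  · intro m hm
    rw [Finset.mem_Ioo] at hm
    show m - 1 + 1 = m
    omega
  · intro k _
    show k + 1 - 1 = k
    omega
  · intro m hm
    rw [Finset.mem_Ioo] at hm
    have e1 : m - 1 + 1 = m := by omega
    have e2 : n - (m - 1) + 1 = n + 2 - m := by omega
    rw [e1, e2]

end Mat2


end Stmt14

open Stmt14 in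
/-- If `G₁(z) = Σ_{n ≥ 1} D₁⁽ⁿ⁾(z)` converges absolutely, then `G₁(z)` satisfies
`A_{*,−1}(z) + A_{*,0}(z) G₁(z) + A_{*,1}(z) G₁(z)² = G₁(z)`. -/
theorem stmt14 {S : Type*} [Fintype S] [DecidableEq S]
    (A : ℤ → ℤ → Matrix S S ℝ) (hnn : ∀ i j k l, 0 ≤ A i j k l)
    (z : ℂ)
    (habs : ∀ k l, Summable fun n => ‖DnC A (n + 1) z k l‖) :
    AstarC A (-1) z + AstarC A 0 z * (∑' n, DnC A (n + 1) z)
      + AstarC A 1 z * (∑' n, DnC A (n + 1) z) ^ 2 = ∑' n, DnC A (n + 1) z := by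
  classical
  have hnorm : ∀ s t : S, Summable fun n => ‖DnC A (n + 1) z s t‖ := by
    intro s t
    simpa using habs s t
  have hfe : ∀ s t : S, Summable fun n => DnC A (n + 1) z s t :=
    fun s t => (hnorm s t).of_norm
  have hfs : Summable fun n => DnC A (n + 1) z := by
    rw [show (Summable fun n => DnC A (n + 1) z)
        = Summable (fun n (i j : S) => DnC A (n + 1) z i j) from rfl, Pi.summable]
    intro s; rw [Pi.summable]; exact fun t => hfe s t
  have hT : ∀ s t : S, (∑' n, DnC A (n + 1) z) s t = ∑' n, DnC A (n + 1) z s t := by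
    intro s t
    have h1 : (∑' n, DnC A (n + 1) z) s = ∑' n, DnC A (n + 1) z s := tsum_apply hfs
    rw [h1, tsum_apply (Pi.summable.mp hfs s)]
  have hCauchyS : ∀ s u t : S, Summable fun n =>
      ∑ p ∈ Finset.HasAntidiagonal.antidiagonal n, DnC A (p.1 + 1) z s u * DnC A (p.2 + 1) z u t :=
    fun s u t =>
      (summable_norm_sum_mul_antidiagonal_of_summable_norm (hnorm s u) (hnorm u t)).of_norm
  have hCauchy : ∀ s u t : S,
      (∑' n, ∑ p ∈ Finset.HasAntidiagonal.antidiagonal n, DnC A (p.1 + 1) z s u * DnC A (p.2 + 1) z u t)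
        = (∑' n, DnC A (n + 1) z s u) * ∑' n, DnC A (n + 1) z u t := fun s u t =>
    (tsum_mul_tsum_eq_tsum_sum_antidiagonal_of_summable_norm (hnorm s u) (hnorm u t)).symm
  have hD2entry : ∀ (n : ℕ) (s t : S), D2 A (n + 2) z s t
      = ∑ u, ∑ p ∈ Finset.HasAntidiagonal.antidiagonal n, DnC A (p.1 + 1) z s u * DnC A (p.2 + 1) z u t := by
    intro n s t
    rw [D2_succ_succ]
    simp only [Matrix.sum_apply, Matrix.mul_apply]
    exact Finset.sum_comm
  have hD2S : ∀ u t : S, Summable fun n => D2 A (n + 1) z u t := by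
    intro u t
    have h2 : Summable fun n => D2 A (n + 2) z u t :=
      (summable_sum fun v (_ : v ∈ Finset.univ) => hCauchyS u v t).congr
        (fun n => (hD2entry n u t).symm)
    exact (summable_nat_add_iff 1).mp h2
  have hD2tsum : ∀ u t : S, (∑' n, D2 A (n + 1) z u t)
      = ∑ v, (∑' n, DnC A (n + 1) z u v) * ∑' n, DnC A (n + 1) z v t := by
    intro u t
    rw [Summable.tsum_eq_zero_add (hD2S u t)]
    have hz : D2 A (0 + 1) z u t = 0 := by
      rw [show (0 : ℕ) + 1 = 1 from rfl, D2_one A z]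
      rfl
    rw [hz, zero_add]
    calc (∑' n, D2 A (n + 1 + 1) z u t)
        = ∑' n, ∑ v, ∑ p ∈ Finset.HasAntidiagonal.antidiagonal n,
            DnC A (p.1 + 1) z u v * DnC A (p.2 + 1) z v t :=
          tsum_congr fun n => hD2entry n u t
      _ = ∑ v, ∑' n, ∑ p ∈ Finset.HasAntidiagonal.antidiagonal n,
            DnC A (p.1 + 1) z u v * DnC A (p.2 + 1) z v t :=
          Summable.tsum_finsetSum fun v _ => hCauchyS u v t
      _ = ∑ v, (∑' n, DnC A (n + 1) z u v) * ∑' n, DnC A (n + 1) z v t :=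
          Finset.sum_congr rfl fun v _ => hCauchy u v t
  have hrec : ∀ (n : ℕ) (s t : S), DnC A (n + 2) z s t
      = (∑ u, AstarC A 0 z s u * DnC A (n + 1) z u t)
        + ∑ u, AstarC A 1 z s u * D2 A (n + 1) z u t := by
    intro n s t
    rw [Dn_rec]
    simp [Matrix.add_apply, Matrix.mul_apply]
  have hG : ∀ s t : S, (∑' n, DnC A (n + 1) z s t)
      = AstarC A (-1) z s t + (∑ u, AstarC A 0 z s u * ∑' n, DnC A (n + 1) z u t)
        + ∑ u, AstarC A 1 z s u *
            ∑ v, (∑' n, DnC A (n + 1) z u v) * ∑' n, DnC A (n + 1) z v t := by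
    intro s t
    have hsum1 : ∀ u : S, Summable fun n => AstarC A 0 z s u * DnC A (n + 1) z u t :=
      fun u => (hfe u t).mul_left _
    have hsum2 : ∀ u : S, Summable fun n => AstarC A 1 z s u * D2 A (n + 1) z u t :=
      fun u => (hD2S u t).mul_left _
    have hDn1 : DnC A (0 + 1) z s t = AstarC A (-1) z s t := by
      rw [show (0 : ℕ) + 1 = 1 from rfl, DnC_one]
    calc (∑' n, DnC A (n + 1) z s t)
        = DnC A (0 + 1) z s t + ∑' n, DnC A (n + 1 + 1) z s t :=
          Summable.tsum_eq_zero_add (hfe s t)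
      _ = AstarC A (-1) z s t + ∑' n, ((∑ u, AstarC A 0 z s u * DnC A (n + 1) z u t)
            + ∑ u, AstarC A 1 z s u * D2 A (n + 1) z u t) := by
          rw [hDn1]
          congr 1
          exact tsum_congr fun n => hrec n s t
      _ = AstarC A (-1) z s t + ((∑' n, ∑ u, AstarC A 0 z s u * DnC A (n + 1) z u t)
            + ∑' n, ∑ u, AstarC A 1 z s u * D2 A (n + 1) z u t) := by
          rw [Summable.tsum_add (summable_sum fun u _ => hsum1 u) (summable_sum fun u _ => hsum2 u)]
      _ = AstarC A (-1) z s t + (∑ u, AstarC A 0 z s u * ∑' n, DnC A (n + 1) z u t)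
          + ∑ u, AstarC A 1 z s u *
              ∑ v, (∑' n, DnC A (n + 1) z u v) * ∑' n, DnC A (n + 1) z v t := by
          rw [Summable.tsum_finsetSum fun u (_ : u ∈ Finset.univ) => hsum1 u,
            Summable.tsum_finsetSum fun u (_ : u ∈ Finset.univ) => hsum2 u, ← add_assoc]
          congr 1
          · congr 1
            exact Finset.sum_congr rfl fun u _ => tsum_mul_left
          · refine Finset.sum_congr rfl fun u _ => ?_
            rw [tsum_mul_left, hD2tsum u t]
  rw [sq]
  ext s t
  simp only [Matrix.add_apply, Matrix.mul_apply, hT]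
  exact (hG s t).symm
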